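/- arXiv:2506.13135 — 2 statements merged into one kernel-verified Lean document; each statement's English description precedes it below -/
import Mathlib

section
/- Let n ≥ 1 and β > 0. Let A : ℝⁿ → ℝ^{n×n} be continuous with A(x) symmetric positive definite for every x, let b : ℝⁿ → ℝⁿ be continuous, let ρ : ℝⁿ → (0,∞) be continuously differentiable, and let k : ℝⁿ × ℝⁿ → (0,∞) be continuous. Define the local probability current j^loc(x) := b(x)ρ(x) − β⁻¹A(x)∇ρ(x) and the nonlocal probability current j^nl(x,y) := ρ(x)k(x,y) − ρ(y)k(y,x), and assume that x ↦ j^loc(x)ᵀA(x)⁻¹j^loc(x)/ρ(x) is integrable on ℝⁿ and that (x,y) ↦ j^nl(x,y)·log(ρ(x)k(x,y)/(ρ(y)k(y,x))) is integrable on ℝⁿ × ℝⁿ. Define the entropy production rate e_p := β∫_{ℝⁿ} j^loc(x)ᵀA(x)⁻¹j^loc(x)/ρ(x) dx + (1/2)∫_{ℝⁿ}∫_{ℝⁿ} j^nl(x,y)·log(ρ(x)k(x,y)/(ρ(y)k(y,x))) dy dx. Then e_p ≥ 0, and e_p = 0 if and only if j^loc(x) = 0 and j^nl(x,y) = 0 for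 all x, y ∈ ℝⁿ. -/
open MeasureTheory Matrix

/-- The gradient of a scalar function on `ℝⁿ`, given by the partial derivatives. -/
noncomputable def grad {n : ℕ} (f : (Fin n → ℝ) → ℝ) (x : Fin n → ℝ) : Fin n → ℝ :=
  fun i => fderiv ℝ f x (Pi.single i 1)

lemma aux_sub_mul_log_nonneg {a b : ℝ} (ha : 0 < a) (hb : 0 < b) :
    0 ≤ (a - b) * Real.log (a / b) := by
  rw [Real.log_div ha.ne' hb.ne']
  rcases le_total a b with h | h
  · have h1 : Real.log a ≤ Real.log b := Real.log_le_log ha h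
    nlinarith
  · have h1 : Real.log b ≤ Real.log a := Real.log_le_log hb h
    nlinarith

lemma aux_sub_mul_log_eq_zero {a b : ℝ} (ha : 0 < a) (hb : 0 < b)
    (h : (a - b) * Real.log (a / b) = 0) : a = b := by
  rcases mul_eq_zero.1 h with h' | h'
  · linarith
  · rcases Real.log_eq_zero.1 h' with h'' | h'' | h''
    · exact absurd h'' (div_ne_zero ha.ne' hb.ne')
    · field_simp at h''; linarith
    · nlinarith [div_pos ha hb]

theorem stmt_3 (n : ℕ) (hn : 1 ≤ n) (β : ℝ) (hβ : 0 < β)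
    (A : (Fin n → ℝ) → Matrix (Fin n) (Fin n) ℝ)
    (b : (Fin n → ℝ) → (Fin n → ℝ))
    (ρ : (Fin n → ℝ) → ℝ) (k : (Fin n → ℝ) → (Fin n → ℝ) → ℝ)
    (hAcont : Continuous A) (hApos : ∀ x, (A x).PosDef)
    (hbcont : Continuous b)
    (hρ : ContDiff ℝ 1 ρ) (hρpos : ∀ x, 0 < ρ x)
    (hkcont : Continuous fun p : (Fin n → ℝ) × (Fin n → ℝ) => k p.1 p.2)
    (hkpos : ∀ x y, 0 < k x y)
    (jloc : (Fin n → ℝ) → (Fin n → ℝ))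
    (hjloc : ∀ x, jloc x = ρ x • b x - β⁻¹ • ((A x) *ᵥ grad ρ x))
    (jnl : (Fin n → ℝ) → (Fin n → ℝ) → ℝ)
    (hjnl : ∀ x y, jnl x y = ρ x * k x y - ρ y * k y x)
    (hint1 : Integrable fun x => (jloc x ⬝ᵥ (A x)⁻¹ *ᵥ jloc x) / ρ x)
    (hint2 : Integrable fun p : (Fin n → ℝ) × (Fin n → ℝ) =>
      jnl p.1 p.2 * Real.log (ρ p.1 * k p.1 p.2 / (ρ p.2 * k p.2 p.1)))
    (ep : ℝ)
    (hep : ep = β * (∫ x, (jloc x ⬝ᵥ (A x)⁻¹ *ᵥ jloc x) / ρ x) +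
      (1 / 2) * ∫ x, ∫ y, jnl x y * Real.log (ρ x * k x y / (ρ y * k y x))) :
    0 ≤ ep ∧ (ep = 0 ↔ (∀ x, jloc x = 0) ∧ ∀ x y, jnl x y = 0) := by
  -- positivity facts
  have hAinv : ∀ x, (A x)⁻¹.PosDef := fun x => (hApos x).inv
  have hf1nn : ∀ x, 0 ≤ (jloc x ⬝ᵥ (A x)⁻¹ *ᵥ jloc x) / ρ x := by
    intro x
    apply div_nonneg _ (hρpos x).le
    have := (hAinv x).posSemidef.dotProduct_mulVec_nonneg (jloc x)
    simpa using this
  have hf2nn : ∀ x y, 0 ≤ jnl x y * Real.log (ρ x * k x y / (ρ y * k y x)) := by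
    intro x y
    rw [hjnl]
    exact aux_sub_mul_log_nonneg (mul_pos (hρpos x) (hkpos x y))
      (mul_pos (hρpos y) (hkpos y x))
  -- the two integrals
  set I1 : ℝ := ∫ x, (jloc x ⬝ᵥ (A x)⁻¹ *ᵥ jloc x) / ρ x with hI1def
  set I2 : ℝ := ∫ x, ∫ y, jnl x y * Real.log (ρ x * k x y / (ρ y * k y x)) with hI2def
  have hint2' : Integrable (Function.uncurry fun x y =>
      jnl x y * Real.log (ρ x * k x y / (ρ y * k y x)))
      ((volume : Measure (Fin n → ℝ)).prod volume) := by
    rw [← Measure.volume_eq_prod]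
    exact hint2
  have hI2eq : I2 = ∫ p : (Fin n → ℝ) × (Fin n → ℝ),
      jnl p.1 p.2 * Real.log (ρ p.1 * k p.1 p.2 / (ρ p.2 * k p.2 p.1))
      ∂((volume : Measure (Fin n → ℝ)).prod volume) := by
    rw [hI2def]
    exact MeasureTheory.integral_integral hint2'
  have hI1nn : 0 ≤ I1 := integral_nonneg hf1nn
  have hI2nn : 0 ≤ I2 := by
    rw [hI2eq]
    exact integral_nonneg fun p : (Fin n → ℝ) × (Fin n → ℝ) => hf2nn p.1 p.2
  have hepnn : 0 ≤ ep := by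
    rw [hep]
    have := mul_nonneg hβ.le hI1nn
    nlinarith
  refine ⟨hepnn, ?_, ?_⟩
  · -- ep = 0 → currents vanish
    intro h0
    have hI1z : I1 = 0 := by nlinarith [mul_nonneg hβ.le hI1nn]
    have hI2z : I2 = 0 := by nlinarith [mul_nonneg hβ.le hI1nn]
    -- continuity of the local integrand
    have hρc : Continuous ρ := hρ.continuous
    have hgradc : Continuous (grad ρ) := by
      have hfd : Continuous (fderiv ℝ ρ) := (contDiff_one_iff_fderiv.1 hρ).2
      exact continuous_pi fun i => hfd.clm_apply continuous_const
    have hjlocc : Continuous jloc := by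
      have : Continuous fun x => ρ x • b x - β⁻¹ • ((A x) *ᵥ grad ρ x) :=
        (hρc.smul hbcont).sub ((hAcont.matrix_mulVec hgradc).const_smul β⁻¹)
      simpa [funext hjloc] using this
    have hAinvc : Continuous fun x => (A x)⁻¹ := by
      have : (fun x => (A x)⁻¹) = fun x => ((A x).det)⁻¹ • (A x).adjugate := by
        funext x; rw [Matrix.inv_def, Ring.inverse_eq_inv]
      rw [this]
      exact (hAcont.matrix_det.inv₀ fun x => (hApos x).det_pos.ne').smul
        hAcont.matrix_adjugate
    have hf1c : Continuous fun x => (jloc x ⬝ᵥ (A x)⁻¹ *ᵥ jloc x) / ρ x :=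
      (hjlocc.dotProduct (hAinvc.matrix_mulVec hjlocc)).div hρc
        fun x => (hρpos x).ne'
    have hf1ae : (fun x => (jloc x ⬝ᵥ (A x)⁻¹ *ᵥ jloc x) / ρ x) =ᵐ[volume] 0 :=
      (integral_eq_zero_iff_of_nonneg hf1nn hint1).1 hI1z
    have hf1z : ∀ x, (jloc x ⬝ᵥ (A x)⁻¹ *ᵥ jloc x) / ρ x = 0 := by
      have := (hf1c.ae_eq_iff_eq volume continuous_zero).1 hf1ae
      intro x; exact congrFun this x
    constructor
    · intro x
      by_contra hx
      have hpos := (hAinv x).dotProduct_mulVec_pos hx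
      have : jloc x ⬝ᵥ (A x)⁻¹ *ᵥ jloc x = 0 :=
        (div_eq_zero_iff.1 (hf1z x)).resolve_right (hρpos x).ne'
      simp only [star_trivial] at hpos
      rw [this] at hpos
      exact lt_irrefl 0 hpos
    · -- nonlocal part
      have hf2c : Continuous fun p : (Fin n → ℝ) × (Fin n → ℝ) =>
          jnl p.1 p.2 * Real.log (ρ p.1 * k p.1 p.2 / (ρ p.2 * k p.2 p.1)) := by
        have hkc' : Continuous fun p : (Fin n → ℝ) × (Fin n → ℝ) => k p.2 p.1 :=
          hkcont.comp continuous_swap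
        have hjnlc : Continuous fun p : (Fin n → ℝ) × (Fin n → ℝ) => jnl p.1 p.2 := by
          have : Continuous fun p : (Fin n → ℝ) × (Fin n → ℝ) =>
              ρ p.1 * k p.1 p.2 - ρ p.2 * k p.2 p.1 :=
            ((hρc.comp continuous_fst).mul hkcont).sub
              ((hρc.comp continuous_snd).mul hkc')
          simpa [funext fun x => funext (hjnl x)] using this
        refine hjnlc.mul (Continuous.log ?_ ?_)
        · exact ((hρc.comp continuous_fst).mul hkcont).div
            ((hρc.comp continuous_snd).mul hkc')
            fun p => (mul_pos (hρpos p.2) (hkpos p.2 p.1)).ne'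
        · intro p
          exact (div_pos (mul_pos (hρpos p.1) (hkpos p.1 p.2))
            (mul_pos (hρpos p.2) (hkpos p.2 p.1))).ne'
      have hf2ae := (integral_eq_zero_iff_of_nonneg (fun p : (Fin n → ℝ) × (Fin n → ℝ) => hf2nn p.1 p.2) hint2').1
        (hI2eq ▸ hI2z)
      have hf2z := (hf2c.ae_eq_iff_eq (volume.prod volume) continuous_zero).1 hf2ae
      intro x y
      have hxy : jnl x y * Real.log (ρ x * k x y / (ρ y * k y x)) = 0 :=
        congrFun hf2z (x, y)
      rw [hjnl] at hxy ⊢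
      have := aux_sub_mul_log_eq_zero (mul_pos (hρpos x) (hkpos x y))
        (mul_pos (hρpos y) (hkpos y x)) hxy
      linarith
  · -- currents vanish → ep = 0
    rintro ⟨h1, h2⟩
    have e1 : I1 = 0 := by
      rw [hI1def]
      have : (fun x => (jloc x ⬝ᵥ (A x)⁻¹ *ᵥ jloc x) / ρ x) = fun _ => 0 := by
        funext x; simp [h1 x]
      rw [this, integral_zero]
    have e2 : I2 = 0 := by
      rw [hI2def]
      have : (fun x => ∫ y, jnl x y * Real.log (ρ x * k x y / (ρ y * k y x)))
          = fun _ => (0 : ℝ) := by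
        funext x
        have : (fun y => jnl x y * Real.log (ρ x * k x y / (ρ y * k y x)))
            = fun _ => (0 : ℝ) := by
          funext y; simp [h2 x y]
        rw [this, integral_zero]
      rw [this, integral_zero]
    rw [hep, e1, e2]
    ring
end

section
/- Let n ≥ 1, β > 0, Z > 0, let V : ℝⁿ → ℝ be twice continuously differentiable with ∫ e^{−βV(x)} dx < ∞, and set ρ_ss(x) := Z⁻¹ e^{−βV(x)}. Let A : ℝⁿ → ℝ^{n×n} be continuously differentiable with A(x) symmetric for every x, let s : ℝⁿ × ℝⁿ → [0,∞) be measurable with s(x,y) = s(y,x) for all x, y, and set k(x,y) := e^{−β(V(y) − V(x))/2} s(x,y). Assume ∫_{ℝⁿ} k(x,y) dy < ∞ for every x, and that for every compact set S ⊆ ℝⁿ the function (x,y) ↦ k(x,y)e^{−βV(x)} is integrable on S × ℝⁿ and on ℝⁿ × S. Define the generator 𝓛f(x) := −(A(x)∇V(x))·∇f(x) + β⁻¹∇·(A(x)∇f(x)) + ∫_{ℝⁿ}(f(y) − f(x))k(x,y) dy. Then for all smooth compactly supported f, g : ℝⁿ → ℝ, ∫_{ℝⁿ} f(x) 𝓛g(x)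 ρ_ss(x) dx = ∫_{ℝⁿ} g(x) 𝓛f(x) ρ_ss(x) dx. -/
open MeasureTheory Matrix

/-- The divergence of a vector field on `ℝⁿ`. -/
noncomputable def dive {n : ℕ} (v : (Fin n → ℝ) → (Fin n → ℝ)) (x : Fin n → ℝ) : ℝ :=
  ∑ i, fderiv ℝ (fun y => v y i) x (Pi.single i 1)

lemma fderiv_apply_comp {n : ℕ} (v : (Fin n → ℝ) → (Fin n → ℝ)) (hv : ContDiff ℝ 1 v)
    (x : Fin n → ℝ) (i : Fin n) :
    fderiv ℝ (fun y => v y i) x = (ContinuousLinearMap.proj i).comp (fderiv ℝ v x) := by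
  have h : HasFDerivAt (fun y => v y i)
      ((ContinuousLinearMap.proj (R := ℝ) (φ := fun _ : Fin n => ℝ) i).comp (fderiv ℝ v x)) x := by
    exact
      (ContinuousLinearMap.proj (R := ℝ) (φ := fun _ : Fin n => ℝ) i).hasFDerivAt.comp x
        (hv.differentiable (by norm_num) x).hasFDerivAt
  exact h.fderiv

lemma dive_eq_sum_fderiv {n : ℕ} (v : (Fin n → ℝ) → (Fin n → ℝ)) (hv : ContDiff ℝ 1 v)
    (x : Fin n → ℝ) : dive v x = ∑ i, fderiv ℝ v x (Pi.single i 1) i := by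
  unfold dive
  exact Finset.sum_congr rfl fun i _ => by rw [fderiv_apply_comp v hv x i]; rfl

lemma dive_eq_zero_of_nmem {n : ℕ} (v : (Fin n → ℝ) → (Fin n → ℝ)) {x : Fin n → ℝ}
    (hx : x ∉ tsupport v) : dive v x = 0 := by
  unfold dive
  refine Finset.sum_eq_zero fun i _ => ?_
  have h : fderiv ℝ (fun y => v y i) x = 0 := by
    by_contra h
    have hmem : x ∈ tsupport fun y => v y i :=
      tsupport_fderiv_subset ℝ (subset_closure (by simpa [Function.mem_support] using h))
    refine hx (closure_mono (fun z hz => ?_) hmem)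
    simp only [Function.mem_support] at hz ⊢
    exact fun h0 => hz (by rw [h0]; rfl)
  simp [h]

lemma grad_eq_zero_of_nmem {n : ℕ} (f : (Fin n → ℝ) → ℝ) {x : Fin n → ℝ}
    (hx : x ∉ tsupport f) : ∀ i, grad f x i = 0 := by
  have h : fderiv ℝ f x = 0 := by
    by_contra h
    exact hx (tsupport_fderiv_subset ℝ (subset_closure (by simpa [Function.mem_support] using h)))
  intro i; simp [grad, h]

lemma integral_dive_eq_zero {n : ℕ} (hn : 1 ≤ n) (v : (Fin n → ℝ) → (Fin n → ℝ))
    (hv : ContDiff ℝ 1 v) (hsupp : HasCompactSupport v) :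
    ∫ x, dive v x = 0 := by
  obtain ⟨m, rfl⟩ : ∃ m, n = m + 1 := ⟨n - 1, (Nat.succ_pred_eq_of_pos hn).symm⟩
  obtain ⟨R, hR0, hRsub⟩ : ∃ R, 0 < R ∧ tsupport v ⊆ Metric.closedBall 0 R :=
    hsupp.isBounded.subset_closedBall_lt 0 0
  set a : Fin (m + 1) → ℝ := fun _ => -(R + 1) with ha
  set b : Fin (m + 1) → ℝ := fun _ => R + 1 with hb
  have hout : ∀ x : Fin (m + 1) → ℝ, ∀ i, R < |x i| → x ∉ tsupport v := by
    intro x i hi hmem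
    have h1 : ‖x‖ ≤ R := by
      have := hRsub hmem
      rwa [Metric.mem_closedBall, dist_zero_right] at this
    have h2 : |x i| ≤ ‖x‖ := by
      simpa [Real.norm_eq_abs] using norm_le_pi_norm x i
    linarith
  have hv0 : ∀ x : Fin (m + 1) → ℝ, ∀ i, R < |x i| → v x = 0 := fun x i hx =>
    image_eq_zero_of_notMem_tsupport (hout x i hx)
  have hle : a ≤ b := fun i => by simp [ha, hb]; linarith
  have hcont : Continuous fun x : Fin (m+1) → ℝ => ∑ i, fderiv ℝ v x (Pi.single i 1) i :=
    continuous_finset_sum _ fun i _ =>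
      (continuous_apply i).comp ((hv.continuous_fderiv (by norm_num)).clm_apply continuous_const)
  have key := MeasureTheory.integral_divergence_of_hasFDerivAt_off_countable a b hle
    v (fun x => fderiv ℝ v x) ∅ Set.countable_empty
    hv.continuous.continuousOn
    (fun x _ => (hv.differentiable (by norm_num) x).hasFDerivAt)
    (hcont.continuousOn.integrableOn_compact isCompact_Icc)
  have hfront : ∀ i : Fin (m+1), ∀ y : Fin m → ℝ, v (i.insertNth (b i) y) = 0 := by
    intro i y
    refine hv0 _ i ?_
    rw [Fin.insertNth_apply_same]
    simp only [hb]
    rw [abs_of_pos (by linarith)]; linarith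
  have hback : ∀ i : Fin (m+1), ∀ y : Fin m → ℝ, v (i.insertNth (a i) y) = 0 := by
    intro i y
    refine hv0 _ i ?_
    rw [Fin.insertNth_apply_same]
    simp only [ha]
    rw [abs_of_neg (by linarith)]; linarith
  have hz : ∀ x : Fin (m+1) → ℝ, x ∉ Set.Icc a b → dive v x = 0 := by
    intro x hx
    rw [Set.mem_Icc] at hx
    push_neg at hx
    rcases Classical.em (a ≤ x) with hax | hax
    · obtain ⟨i, hi⟩ : ∃ i, b i < x i := by
        have := hx hax
        rw [Pi.le_def] at this; push_neg at this
        simpa using this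
      clear hx
      refine dive_eq_zero_of_nmem v (hout x i ?_)
      simp only [hb] at hi
      have : (0:ℝ) < x i := by linarith
      rw [abs_of_pos this]; linarith
    · obtain ⟨i, hi⟩ : ∃ i, x i < a i := by
        rw [Pi.le_def] at hax; push_neg at hax
        simpa using hax
      clear hx hax
      refine dive_eq_zero_of_nmem v (hout x i ?_)
      simp only [ha] at hi
      have : x i < 0 := by linarith
      rw [abs_of_neg this]; linarith
  calc ∫ x, dive v x = ∫ x in Set.Icc a b, dive v x :=
        (setIntegral_eq_integral_of_forall_compl_eq_zero hz).symm
    _ = ∫ x in Set.Icc a b, ∑ i, fderiv ℝ v x (Pi.single i 1) i :=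
        setIntegral_congr_fun measurableSet_Icc fun x _ => dive_eq_sum_fderiv v hv x
    _ = 0 := by rw [key]; simp [hfront, hback]

lemma fderiv_triple {n : ℕ} (β : ℝ) {V f u : (Fin n → ℝ) → ℝ} {x : Fin n → ℝ}
    (hV : DifferentiableAt ℝ V x) (hf : DifferentiableAt ℝ f x)
    (hu : DifferentiableAt ℝ u x) (w : Fin n → ℝ) :
    fderiv ℝ (fun y => f y * (Real.exp (-β * V y) * u y)) x w =
      fderiv ℝ f x w * (Real.exp (-β * V x) * u x) +
        f x * (Real.exp (-β * V x) * (-β * fderiv ℝ V x w) * u x +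
          Real.exp (-β * V x) * fderiv ℝ u x w) := by
  have hV' : DifferentiableAt ℝ (fun y => -β * V y) x := hV.const_mul (-β)
  have hE : DifferentiableAt ℝ (fun y => Real.exp (-β * V y)) x := hV'.exp
  rw [fderiv_fun_mul hf (show DifferentiableAt ℝ (fun y => Real.exp (-β * V y) * u y) x from hE.mul hu), fderiv_fun_mul hE hu, fderiv_exp hV', fderiv_const_mul hV]
  simp only [ContinuousLinearMap.add_apply, ContinuousLinearMap.smul_apply,
    ContinuousLinearMap.coe_smul', Pi.smul_apply, smul_eq_mul]
  ring

lemma contDiff_grad_apply {n : ℕ} {f : (Fin n → ℝ) → ℝ} (hf : ContDiff ℝ 2 f) (j : Fin n) :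
    ContDiff ℝ 1 fun x => grad f x j := by
  have h := hf.fderiv_right (m := 1) (by norm_num)
  exact h.clm_apply contDiff_const

lemma contDiff_mulVec_grad {n : ℕ} {A : (Fin n → ℝ) → Matrix (Fin n) (Fin n) ℝ}
    (hA : ∀ i j, ContDiff ℝ 1 fun x => A x i j) {g : (Fin n → ℝ) → ℝ}
    (hg : ContDiff ℝ 2 g) (i : Fin n) :
    ContDiff ℝ 1 fun x => (A x *ᵥ grad g x) i := by
  simp only [Matrix.mulVec, dotProduct]
  exact ContDiff.sum fun j _ => (hA i j).mul (contDiff_grad_apply hg j)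

lemma dive_W {n : ℕ} (β : ℝ) {V f g : (Fin n → ℝ) → ℝ}
    {A : (Fin n → ℝ) → Matrix (Fin n) (Fin n) ℝ}
    (hV : ContDiff ℝ 2 V) (hf : ContDiff ℝ 2 f) (hg : ContDiff ℝ 2 g)
    (hA : ∀ i j, ContDiff ℝ 1 fun x => A x i j) (x : Fin n → ℝ) :
    dive (fun y => fun i => f y * (Real.exp (-β * V y) * (A y *ᵥ grad g y) i)) x
      = (grad f x ⬝ᵥ (A x *ᵥ grad g x)) * Real.exp (-β * V x)
        + (-β) * (f x * ((grad V x ⬝ᵥ (A x *ᵥ grad g x)) * Real.exp (-β * V x)))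
        + f x * Real.exp (-β * V x) * dive (fun y => A y *ᵥ grad g y) x := by
  have hstep : ∀ i, fderiv ℝ (fun y => f y * (Real.exp (-β * V y) * (A y *ᵥ grad g y) i)) x
      (Pi.single i 1) =
      grad f x i * (Real.exp (-β * V x) * (A x *ᵥ grad g x) i) +
        f x * (Real.exp (-β * V x) * (-β * grad V x i) * (A x *ᵥ grad g x) i +
          Real.exp (-β * V x) * fderiv ℝ (fun y => (A y *ᵥ grad g y) i) x (Pi.single i 1)) :=
    fun i => fderiv_triple β (hV.differentiable (by norm_num) x)
      (hf.differentiable (by norm_num) x)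
      ((contDiff_mulVec_grad hA hg i).differentiable (by norm_num) x) _
  unfold dive
  rw [Finset.sum_congr rfl fun i _ => hstep i]
  simp only [mul_add, Finset.sum_add_distrib]
  have e1 : ∑ i, grad f x i * (Real.exp (-β * V x) * (A x *ᵥ grad g x) i)
      = (grad f x ⬝ᵥ (A x *ᵥ grad g x)) * Real.exp (-β * V x) := by
    simp only [dotProduct, Finset.sum_mul]
    exact Finset.sum_congr rfl fun i _ => by ring
  have e2 : ∑ i, f x * (Real.exp (-β * V x) * (-β * grad V x i) * (A x *ᵥ grad g x) i)
      = (-β) * (f x * ((grad V x ⬝ᵥ (A x *ᵥ grad g x)) * Real.exp (-β * V x))) := by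
    simp only [dotProduct, Finset.mul_sum, Finset.sum_mul]
    exact Finset.sum_congr rfl fun i _ => by ring
  have e3 : ∑ i, f x * (Real.exp (-β * V x) *
      fderiv ℝ (fun y => (A y *ᵥ grad g y) i) x (Pi.single i 1))
      = f x * Real.exp (-β * V x) *
        ∑ i, fderiv ℝ (fun y => (A y *ᵥ grad g y) i) x (Pi.single i 1) := by
    simp only [Finset.mul_sum]
    exact Finset.sum_congr rfl fun i _ => by ring
  rw [e1, e2, e3]
  ring

theorem stmt_10 (n : ℕ) (hn : 1 ≤ n) (β Z : ℝ) (hβ : 0 < β) (hZ : 0 < Z)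
    (V : (Fin n → ℝ) → ℝ) (hV : ContDiff ℝ 2 V)
    (hVint : Integrable fun x => Real.exp (-β * V x))
    (ρss : (Fin n → ℝ) → ℝ)
    (hρss : ∀ x, ρss x = Z⁻¹ * Real.exp (-β * V x))
    (A : (Fin n → ℝ) → Matrix (Fin n) (Fin n) ℝ)
    (hA : ∀ i j, ContDiff ℝ 1 fun x => A x i j) (hAsymm : ∀ x, (A x).IsSymm)
    (s : (Fin n → ℝ) → (Fin n → ℝ) → ℝ)
    (hsmeas : Measurable fun p : (Fin n → ℝ) × (Fin n → ℝ) => s p.1 p.2)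
    (hsnonneg : ∀ x y, 0 ≤ s x y) (hssymm : ∀ x y, s x y = s y x)
    (k : (Fin n → ℝ) → (Fin n → ℝ) → ℝ)
    (hk : ∀ x y, k x y = Real.exp (-β * (V y - V x) / 2) * s x y)
    (hkint : ∀ x, Integrable fun y => k x y)
    (hkint1 : ∀ S : Set (Fin n → ℝ), IsCompact S →
      IntegrableOn (fun p : (Fin n → ℝ) × (Fin n → ℝ) => k p.1 p.2 * Real.exp (-β * V p.1))
        (S ×ˢ Set.univ))
    (hkint2 : ∀ S : Set (Fin n → ℝ), IsCompact S →
      IntegrableOn (fun p : (Fin n → ℝ) × (Fin n → ℝ) => k p.1 p.2 * Real.exp (-β * V p.1))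
        (Set.univ ×ˢ S))
    (L : ((Fin n → ℝ) → ℝ) → (Fin n → ℝ) → ℝ)
    (hL : ∀ f x, L f x = (-((A x) *ᵥ grad V x)) ⬝ᵥ grad f x +
      β⁻¹ * dive (fun y => (A y) *ᵥ grad f y) x + ∫ y, (f y - f x) * k x y) :
    ∀ f g : (Fin n → ℝ) → ℝ,
      ContDiff ℝ (⊤ : ℕ∞) f → HasCompactSupport f →
      ContDiff ℝ (⊤ : ℕ∞) g → HasCompactSupport g →
      ∫ x, f x * L g x * ρss x = ∫ x, g x * L f x * ρss x := by
  have hβ0 : β ≠ 0 := ne_of_gt hβ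
  have hVm : Measurable V := hV.continuous.measurable
  set K : ((Fin n → ℝ) × (Fin n → ℝ)) → ℝ :=
    fun p => k p.1 p.2 * Real.exp (-β * V p.1) with hKdef
  have hkm : Measurable fun p : (Fin n → ℝ) × (Fin n → ℝ) => k p.1 p.2 := by
    have : (fun p : (Fin n → ℝ) × (Fin n → ℝ) => k p.1 p.2)
        = fun p => Real.exp (-β * (V p.2 - V p.1) / 2) * s p.1 p.2 := by
      funext p; rw [hk]
    rw [this]
    exact (Real.measurable_exp.comp
      ((((hVm.comp measurable_snd).sub (hVm.comp measurable_fst)).const_mul (-β)).div_const 2)).mul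
      hsmeas
  have hKm : Measurable K :=
    hkm.mul (Real.measurable_exp.comp ((hVm.comp measurable_fst).const_mul (-β)))
  have hKsymm : ∀ x y, K (y, x) = K (x, y) := by
    intro x y
    simp only [hKdef, hk, hssymm y x]
    have harg : -β * (V x - V y) / 2 + -β * V y = -β * (V y - V x) / 2 + -β * V x := by ring
    rw [mul_right_comm, mul_right_comm (Real.exp (-β * (V y - V x) / 2)) (s x y),
      ← Real.exp_add, ← Real.exp_add, harg]
  have hsym : ∀ x (v w : Fin n → ℝ), (A x *ᵥ v) ⬝ᵥ w = v ⬝ᵥ (A x *ᵥ w) := by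
    intro x v w
    rw [Matrix.dotProduct_mulVec, ← Matrix.mulVec_transpose, (hAsymm x).eq, dotProduct_comm,
      Matrix.dotProduct_mulVec, ← Matrix.mulVec_transpose, (hAsymm x).eq, dotProduct_comm]
  have key : ∀ f g : (Fin n → ℝ) → ℝ,
      ContDiff ℝ (⊤ : ℕ∞) f → HasCompactSupport f →
      ContDiff ℝ (⊤ : ℕ∞) g → HasCompactSupport g →
      ∫ x, f x * L g x * ρss x
        = -(Z⁻¹ * β⁻¹) * (∫ x, (grad f x ⬝ᵥ (A x *ᵥ grad g x)) * Real.exp (-β * V x))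
          + Z⁻¹ * ((∫ p : (Fin n → ℝ) × (Fin n → ℝ), f p.1 * g p.2 * K p)
            - (∫ p : (Fin n → ℝ) × (Fin n → ℝ), f p.1 * g p.1 * K p)) := by
    intro f g hf hfc hg hgc
    have hf2 : ContDiff ℝ 2 f := hf.of_le (WithTop.coe_le_coe.mpr le_top)
    have hg2 : ContDiff ℝ 2 g := hg.of_le (WithTop.coe_le_coe.mpr le_top)
    have hE1 : ContDiff ℝ 1 fun x => Real.exp (-β * V x) :=
      (contDiff_const.mul (hV.of_le (by norm_num))).exp
    have hEc : Continuous fun x => Real.exp (-β * V x) := hE1.continuous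
    have hui : ∀ i, ContDiff ℝ 1 fun x => (A x *ᵥ grad g x) i := contDiff_mulVec_grad hA hg2
    have hWi : ∀ i, ContDiff ℝ 1
        fun y => f y * (Real.exp (-β * V y) * (A y *ᵥ grad g y) i) :=
      fun i => (hf.of_le (by norm_num)).mul (hE1.mul (hui i))
    have hW : ContDiff ℝ 1
        (fun y => fun i => f y * (Real.exp (-β * V y) * (A y *ᵥ grad g y) i)) :=
      contDiff_pi.mpr hWi
    have hWc : HasCompactSupport
        (fun y => fun i => f y * (Real.exp (-β * V y) * (A y *ᵥ grad g y) i)) := by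
      apply hfc.mono
      intro x hx
      simp only [Function.mem_support] at hx ⊢
      intro h0
      exact hx (funext fun i => by simp [h0])
    have hdiveW0 : ∫ x, dive
        (fun y => fun i => f y * (Real.exp (-β * V y) * (A y *ᵥ grad g y) i)) x = 0 :=
      integral_dive_eq_zero hn _ hW hWc
    have hdiveWint : Integrable (fun x => dive
        (fun y => fun i => f y * (Real.exp (-β * V y) * (A y *ᵥ grad g y) i)) x) := by
      apply Continuous.integrable_of_hasCompactSupport
      · exact continuous_finset_sum _ fun i _ =>
          (((hWi i).continuous_fderiv (by norm_num)).clm_apply continuous_const)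
      · exact hWc.mono' fun x hx => by
          by_contra hmem
          exact hx (dive_eq_zero_of_nmem _ hmem)
    have hD2c : Continuous fun x =>
        (grad f x ⬝ᵥ (A x *ᵥ grad g x)) * Real.exp (-β * V x) := by
      refine Continuous.mul ?_ hEc
      simp only [dotProduct]
      exact continuous_finset_sum _ fun i _ =>
        ((contDiff_grad_apply hf2 i).continuous.mul ((hui i).continuous))
    have hD2supp : HasCompactSupport fun x =>
        (grad f x ⬝ᵥ (A x *ᵥ grad g x)) * Real.exp (-β * V x) := by
      apply hfc.mono'
      intro x hx
      simp only [Function.mem_support, ne_eq, not_not] at hx ⊢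
      by_contra hmem
      apply hx
      have := grad_eq_zero_of_nmem f hmem
      simp [dotProduct, this]
    have hD2int : Integrable fun x =>
        (grad f x ⬝ᵥ (A x *ᵥ grad g x)) * Real.exp (-β * V x) :=
      hD2c.integrable_of_hasCompactSupport hD2supp
    -- bounds
    obtain ⟨Cf, hCf⟩ := hfc.exists_bound_of_continuous hf.continuous
    obtain ⟨Cg, hCg⟩ := hgc.exists_bound_of_continuous hg.continuous
    have hCf0 : 0 ≤ Cf := (norm_nonneg (f 0)).trans (hCf 0)
    have hCg0 : 0 ≤ Cg := (norm_nonneg (g 0)).trans (hCg 0)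
    have hCf' : ∀ x, |f x| ≤ Cf := fun x => by rw [← Real.norm_eq_abs]; exact hCf x
    have hCg' : ∀ x, |g x| ≤ Cg := fun x => by rw [← Real.norm_eq_abs]; exact hCg x
    have hSmeas : MeasurableSet ((tsupport f) ×ˢ (Set.univ : Set (Fin n → ℝ))) :=
      (isClosed_tsupport f).measurableSet.prod MeasurableSet.univ
    have hdom : ∀ (φ : (Fin n → ℝ) × (Fin n → ℝ) → ℝ) (C : ℝ), 0 ≤ C → Measurable φ →
        (∀ p, |φ p| ≤ C * |K p|) → (∀ p : (Fin n → ℝ) × (Fin n → ℝ), p.1 ∉ tsupport f → φ p = 0) →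
        Integrable φ := by
      intro φ C hC hm hb h0
      refine Integrable.mono'
        (IntegrableOn.integrable_indicator (((hkint1 _ hfc).norm).const_mul C) hSmeas)
        hm.aestronglyMeasurable (Filter.Eventually.of_forall fun p => ?_)
      by_cases hp : p.1 ∈ tsupport f
      · rw [Set.indicator_of_mem (by exact Set.mem_prod.mpr ⟨hp, Set.mem_univ _⟩)]
        rw [Real.norm_eq_abs]
        exact (hb p).trans (by rw [Real.norm_eq_abs])
      · rw [h0 p hp, Set.indicator_of_notMem (fun hmem => hp (Set.mem_prod.mp hmem).1)]
        simp
    have hT1int : Integrable fun p : (Fin n → ℝ) × (Fin n → ℝ) => f p.1 * g p.2 * K p := by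
      refine hdom _ (Cf * Cg) (mul_nonneg hCf0 hCg0) (((hf.continuous.measurable.comp
        measurable_fst).mul (hg.continuous.measurable.comp measurable_snd)).mul hKm) (fun p => ?_)
        (fun p hp => by simp [image_eq_zero_of_notMem_tsupport hp])
      rw [abs_mul, abs_mul]
      exact mul_le_mul_of_nonneg_right
        (mul_le_mul (hCf' _) (hCg' _) (abs_nonneg _) hCf0) (abs_nonneg _)
    have hT2int : Integrable fun p : (Fin n → ℝ) × (Fin n → ℝ) => f p.1 * g p.1 * K p := by
      refine hdom _ (Cf * Cg) (mul_nonneg hCf0 hCg0) (((hf.continuous.measurable.comp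
        measurable_fst).mul (hg.continuous.measurable.comp measurable_fst)).mul hKm) (fun p => ?_)
        (fun p hp => by simp [image_eq_zero_of_notMem_tsupport hp])
      rw [abs_mul, abs_mul]
      exact mul_le_mul_of_nonneg_right
        (mul_le_mul (hCf' _) (hCg' _) (abs_nonneg _) hCf0) (abs_nonneg _)
    have hFint : Integrable fun p : (Fin n → ℝ) × (Fin n → ℝ) =>
        f p.1 * ((g p.2 - g p.1) * k p.1 p.2) * Real.exp (-β * V p.1) := by
      refine hdom _ (Cf * (Cg + Cg)) (mul_nonneg hCf0 (by linarith))
        ((((hf.continuous.measurable.comp measurable_fst)).mul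
          (((hg.continuous.measurable.comp measurable_snd).sub
            (hg.continuous.measurable.comp measurable_fst)).mul hkm)).mul
          (Real.measurable_exp.comp ((hVm.comp measurable_fst).const_mul (-β))))
        (fun p => ?_)
        (fun p hp => by simp [image_eq_zero_of_notMem_tsupport hp])
      have heq : f p.1 * ((g p.2 - g p.1) * k p.1 p.2) * Real.exp (-β * V p.1)
          = (f p.1 * (g p.2 - g p.1)) * K p := by simp only [hKdef]; ring
      rw [heq, abs_mul, abs_mul]
      refine mul_le_mul_of_nonneg_right (mul_le_mul (hCf' _) ?_ (abs_nonneg _) hCf0)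
        (abs_nonneg _)
      calc |g p.2 - g p.1| ≤ |g p.2| + |g p.1| := abs_sub _ _
        _ ≤ Cg + Cg := add_le_add (hCg' _) (hCg' _)
    -- the jump identity
    have step1 : ∀ x, f x * (∫ y, (g y - g x) * k x y) * Real.exp (-β * V x)
        = ∫ y, f x * ((g y - g x) * k x y) * Real.exp (-β * V x) := fun x => by
      rw [integral_mul_const, integral_const_mul]
    have hD3int : Integrable fun x =>
        f x * (∫ y, (g y - g x) * k x y) * Real.exp (-β * V x) := by
      have h' := hFint
      rw [MeasureTheory.Measure.volume_eq_prod (Fin n → ℝ) (Fin n → ℝ)] at h'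
      have := h'.integral_prod_left
      refine this.congr (Filter.Eventually.of_forall fun x => ?_)
      exact (step1 x).symm
    have hJ : ∫ x, f x * (∫ y, (g y - g x) * k x y) * Real.exp (-β * V x)
        = (∫ p : (Fin n → ℝ) × (Fin n → ℝ), f p.1 * g p.2 * K p)
          - ∫ p : (Fin n → ℝ) × (Fin n → ℝ), f p.1 * g p.1 * K p := by
      simp_rw [step1]
      have h' := hFint
      rw [MeasureTheory.Measure.volume_eq_prod (Fin n → ℝ) (Fin n → ℝ)] at h'
      have h2 := MeasureTheory.integral_integral (μ := volume) (ν := volume)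
        (f := fun x y => f x * ((g y - g x) * k x y) * Real.exp (-β * V x)) h'
      rw [h2, MeasureTheory.Measure.volume_eq_prod (Fin n → ℝ) (Fin n → ℝ)]
      rw [← integral_sub (by rw [← MeasureTheory.Measure.volume_eq_prod (Fin n → ℝ) (Fin n → ℝ)]; exact hT1int)
        (by rw [← MeasureTheory.Measure.volume_eq_prod (Fin n → ℝ) (Fin n → ℝ)]; exact hT2int)]
      congr 1
      funext p
      simp only [hKdef]
      ring
    -- the pointwise identity
    have hpoint : ∀ x, f x * L g x * ρss x
        = (Z⁻¹ * β⁻¹) * dive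
            (fun y => fun i => f y * (Real.exp (-β * V y) * (A y *ᵥ grad g y) i)) x
          + (-(Z⁻¹ * β⁻¹)) * ((grad f x ⬝ᵥ (A x *ᵥ grad g x)) * Real.exp (-β * V x))
          + Z⁻¹ * (f x * (∫ y, (g y - g x) * k x y) * Real.exp (-β * V x)) := by
      intro x
      rw [hL, hρss, dive_W β hV hf2 hg2 hA x, neg_dotProduct,
        hsym x (grad V x) (grad g x)]
      field_simp
      ring
    calc ∫ x, f x * L g x * ρss x
        = ∫ x, ((Z⁻¹ * β⁻¹) * dive
            (fun y => fun i => f y * (Real.exp (-β * V y) * (A y *ᵥ grad g y) i)) x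
          + (-(Z⁻¹ * β⁻¹)) * ((grad f x ⬝ᵥ (A x *ᵥ grad g x)) * Real.exp (-β * V x))
          + Z⁻¹ * (f x * (∫ y, (g y - g x) * k x y) * Real.exp (-β * V x))) := by
          exact integral_congr_ae (Filter.Eventually.of_forall hpoint)
      _ = (Z⁻¹ * β⁻¹) * (∫ x, dive
            (fun y => fun i => f y * (Real.exp (-β * V y) * (A y *ᵥ grad g y) i)) x)
          + (-(Z⁻¹ * β⁻¹)) * (∫ x, (grad f x ⬝ᵥ (A x *ᵥ grad g x)) * Real.exp (-β * V x))
          + Z⁻¹ * (∫ x, f x * (∫ y, (g y - g x) * k x y) * Real.exp (-β * V x)) := by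
          have e := integral_add
            ((hdiveWint.const_mul (Z⁻¹ * β⁻¹)).add (hD2int.const_mul (-(Z⁻¹ * β⁻¹))))
            (hD3int.const_mul Z⁻¹)
          have e2 := integral_add (hdiveWint.const_mul (Z⁻¹ * β⁻¹))
            (hD2int.const_mul (-(Z⁻¹ * β⁻¹)))
          simp only [Pi.add_apply] at e e2
          rw [e, e2, integral_const_mul, integral_const_mul, integral_const_mul]
      _ = -(Z⁻¹ * β⁻¹) * (∫ x, (grad f x ⬝ᵥ (A x *ᵥ grad g x)) * Real.exp (-β * V x))
          + Z⁻¹ * ((∫ p : (Fin n → ℝ) × (Fin n → ℝ), f p.1 * g p.2 * K p)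
            - (∫ p : (Fin n → ℝ) × (Fin n → ℝ), f p.1 * g p.1 * K p)) := by
          rw [hdiveW0, hJ]; ring
  intro f g hf hfc hg hgc
  have hPhi : (∫ x, (grad f x ⬝ᵥ (A x *ᵥ grad g x)) * Real.exp (-β * V x))
      = ∫ x, (grad g x ⬝ᵥ (A x *ᵥ grad f x)) * Real.exp (-β * V x) :=
    integral_congr_ae (Filter.Eventually.of_forall fun x => by
      show grad f x ⬝ᵥ (A x *ᵥ grad g x) * Real.exp (-β * V x)
          = grad g x ⬝ᵥ (A x *ᵥ grad f x) * Real.exp (-β * V x)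
      rw [← hsym x (grad f x) (grad g x), dotProduct_comm])
  have hT1 : (∫ p : (Fin n → ℝ) × (Fin n → ℝ), f p.1 * g p.2 * K p)
      = ∫ p : (Fin n → ℝ) × (Fin n → ℝ), g p.1 * f p.2 * K p := by
    have h1 := MeasureTheory.integral_prod_swap (μ := volume) (ν := volume)
      (fun p : (Fin n → ℝ) × (Fin n → ℝ) => f p.1 * g p.2 * K p)
    rw [MeasureTheory.Measure.volume_eq_prod (Fin n → ℝ) (Fin n → ℝ), ← h1]
    refine integral_congr_ae (Filter.Eventually.of_forall fun p => ?_)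
    show f p.2 * g p.1 * K (p.2, p.1) = g p.1 * f p.2 * K p
    rw [hKsymm p.1 p.2]
    ring
  have hT2 : (∫ p : (Fin n → ℝ) × (Fin n → ℝ), f p.1 * g p.1 * K p)
      = ∫ p : (Fin n → ℝ) × (Fin n → ℝ), g p.1 * f p.1 * K p :=
    integral_congr_ae (Filter.Eventually.of_forall fun p => by ring_nf)
  rw [key f g hf hfc hg hgc, key g f hg hgc hf hfc, hPhi, hT1, hT2]
end
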